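/- Let H be a real Hilbert space and F : H → ℝ a differentiable function whose gradient ∇F is Lipschitz with constant L ≥ 0. Let Θ ∈ H, τ ∈ ℕ, η ≥ 0, w : ℕ → ℝ with w(q) ≥ 0 for all q, and g : ℕ → H, and set Θ' := Θ − η • ∑_{q=0}^{τ−1} w(q) • g(q). Then F(Θ') − F(Θ) ≤ ∑_{q=0}^{τ−1} η·w(q)·( (1/2)·‖∇F(Θ)‖² + (1/2)·‖g(q) − g(0)‖² − ⟨∇F(Θ), g(0)⟩ ) + (L/2)·τ·∑_{q=0}^{τ−1} (η·w(q))²·‖g(q)‖². -/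

import Mathlib

open scoped RealInnerProductSpace

lemma young_neg_inner {H : Type*} [NormedAddCommGroup H] [InnerProductSpace ℝ H]
    (a b : H) : -⟪a, b⟫ ≤ 1 / 2 * ‖a‖ ^ 2 + 1 / 2 * ‖b‖ ^ 2 := by
  have h1 : ⟪a, -b⟫ ≤ ‖a‖ * ‖-b‖ := real_inner_le_norm a (-b)
  rw [inner_neg_right, norm_neg] at h1
  nlinarith [sq_nonneg (‖a‖ - ‖b‖)]

lemma line_hasDerivAt {H : Type*} [NormedAddCommGroup H] [InnerProductSpace ℝ H]
    [CompleteSpace H] (F : H → ℝ) (hF : Differentiable ℝ F) (x v : H) (t : ℝ) :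
    HasDerivAt (fun s : ℝ => F (x + s • v)) ⟪gradient F (x + t • v), v⟫ t := by
  have h1 : HasDerivAt (fun s : ℝ => x + s • v) v t := by
    simpa using ((hasDerivAt_id t).smul_const v).const_add x
  have h2 : HasFDerivAt F (InnerProductSpace.toDual ℝ H (gradient F (x + t • v))) (x + t • v) :=
    (hF _).hasGradientAt
  have h3 := h2.comp_hasDerivAt t h1
  simp only [InnerProductSpace.toDual_apply_apply] at h3
  exact h3

lemma descent_lemma {H : Type*} [NormedAddCommGroup H] [InnerProductSpace ℝ H]
    [CompleteSpace H]
    (F : H → ℝ) (hF : Differentiable ℝ F) (L : ℝ)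
    (hLip : ∀ x y : H, ‖gradient F x - gradient F y‖ ≤ L * ‖x - y‖)
    (x v : H) :
    F (x + v) ≤ F x + ⟪gradient F x, v⟫ + L / 2 * ‖v‖ ^ 2 := by
  set φ : ℝ → ℝ := fun t => F (x + t • v) - t * ⟪gradient F x, v⟫ - L / 2 * t ^ 2 * ‖v‖ ^ 2 with hφ
  have hder : ∀ t : ℝ, HasDerivAt φ
      (⟪gradient F (x + t • v), v⟫ - ⟪gradient F x, v⟫ - L * t * ‖v‖ ^ 2) t := by
    intro t
    have := ((line_hasDerivAt F hF x v t).sub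
      ((hasDerivAt_id t).mul_const ⟪gradient F x, v⟫)).sub
      (((hasDerivAt_pow 2 t).const_mul (L / 2)).mul_const (‖v‖ ^ 2))
    exact this.congr_deriv (by ring)
  have hmono : AntitoneOn φ (Set.Icc (0:ℝ) 1) := by
    apply antitoneOn_of_deriv_nonpos (convex_Icc 0 1)
    · exact Continuous.continuousOn (continuous_iff_continuousAt.2 fun t => (hder t).continuousAt)
    · intro t ht
      exact (hder t).differentiableAt.differentiableWithinAt
    · intro t ht
      rw [(hder t).deriv]
      have ht' : t ∈ Set.Icc (0:ℝ) 1 := by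
        simpa using Set.mem_of_mem_of_subset ht interior_subset
      have h1 : ⟪gradient F (x + t • v), v⟫ - ⟪gradient F x, v⟫
          = ⟪gradient F (x + t • v) - gradient F x, v⟫ := by
        rw [inner_sub_left]
      rw [h1, sub_nonpos]
      calc ⟪gradient F (x + t • v) - gradient F x, v⟫
          ≤ ‖gradient F (x + t • v) - gradient F x‖ * ‖v‖ := real_inner_le_norm _ _
        _ ≤ (L * ‖x + t • v - x‖) * ‖v‖ := by
            exact mul_le_mul_of_nonneg_right (hLip _ _) (norm_nonneg _)
        _ = L * t * ‖v‖ ^ 2 := by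
            rw [add_sub_cancel_left, norm_smul, Real.norm_eq_abs,
              abs_of_nonneg ht'.1]
            ring
  have h01 := hmono (by simp) (by simp) zero_le_one
  simp only [hφ, zero_smul, one_smul, add_zero] at h01
  nlinarith [h01]

/-- Per-round descent estimate from the proof of Theorem 1, for one global round of
`τ` local SGD steps with learning rate `η`, scaling coefficients `w q`, and
update directions `g q`. -/
theorem stmt_17 {H : Type*} [NormedAddCommGroup H] [InnerProductSpace ℝ H]
    [CompleteSpace H]
    (F : H → ℝ) (hF : Differentiable ℝ F) (L : ℝ) (hL : 0 ≤ L)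
    (hLip : ∀ x y : H, ‖gradient F x - gradient F y‖ ≤ L * ‖x - y‖)
    (Θ : H) (τ : ℕ) (η : ℝ) (hη : 0 ≤ η) (w : ℕ → ℝ) (hw : ∀ q, 0 ≤ w q)
    (g : ℕ → H) (Θ' : H)
    (hΘ' : Θ' = Θ - η • ∑ q ∈ Finset.range τ, w q • g q) :
    F Θ' - F Θ ≤
      (∑ q ∈ Finset.range τ, η * w q *
        ((1 / 2) * ‖gradient F Θ‖ ^ 2 + (1 / 2) * ‖g q - g 0‖ ^ 2 -
          ⟪gradient F Θ, g 0⟫)) +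
      (L / 2) * τ * ∑ q ∈ Finset.range τ, (η * w q) ^ 2 * ‖g q‖ ^ 2 := by
  set a := gradient F Θ with ha
  set d : H := ∑ q ∈ Finset.range τ, (η * w q) • g q with hd
  have hd' : η • ∑ q ∈ Finset.range τ, w q • g q = d := by
    rw [hd, Finset.smul_sum]
    exact Finset.sum_congr rfl fun q _ => (smul_smul η (w q) (g q))
  have hdesc := descent_lemma F hF L hLip Θ (-d)
  have hΘ'' : Θ' = Θ + -d := by rw [hΘ', hd', sub_eq_add_neg]
  rw [← hΘ''] at hdesc
  rw [inner_neg_right, norm_neg] at hdesc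
  -- bound the inner product term
  have hA : -⟪a, d⟫ ≤ ∑ q ∈ Finset.range τ, η * w q *
      ((1 / 2) * ‖a‖ ^ 2 + (1 / 2) * ‖g q - g 0‖ ^ 2 - ⟪a, g 0⟫) := by
    rw [hd, inner_sum, ← Finset.sum_neg_distrib]
    apply Finset.sum_le_sum
    intro q _
    rw [real_inner_smul_right]
    have hsplit : ⟪a, g q⟫ = ⟪a, g 0⟫ + ⟪a, g q - g 0⟫ := by
      rw [← inner_add_right, add_sub_cancel]
    have hy := young_neg_inner a (g q - g 0)
    have hc : 0 ≤ η * w q := mul_nonneg hη (hw q)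
    nlinarith [mul_le_mul_of_nonneg_left hy hc]
  -- bound the norm term
  have hB : ‖d‖ ^ 2 ≤ (τ : ℝ) * ∑ q ∈ Finset.range τ, (η * w q) ^ 2 * ‖g q‖ ^ 2 := by
    have h1 : ‖d‖ ≤ ∑ q ∈ Finset.range τ, ‖(η * w q) • g q‖ := norm_sum_le _ _
    have h2 : (∑ q ∈ Finset.range τ, ‖(η * w q) • g q‖) ^ 2 ≤
        (Finset.range τ).card * ∑ q ∈ Finset.range τ, ‖(η * w q) • g q‖ ^ 2 :=
      sq_sum_le_card_mul_sum_sq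
    have h3 : ∀ q, ‖(η * w q) • g q‖ ^ 2 = (η * w q) ^ 2 * ‖g q‖ ^ 2 := by
      intro q
      rw [norm_smul, Real.norm_eq_abs, mul_pow, sq_abs]
    calc ‖d‖ ^ 2 ≤ (∑ q ∈ Finset.range τ, ‖(η * w q) • g q‖) ^ 2 := by
          apply pow_le_pow_left₀ (norm_nonneg _) h1
      _ ≤ (Finset.range τ).card * ∑ q ∈ Finset.range τ, ‖(η * w q) • g q‖ ^ 2 := h2
      _ = (τ : ℝ) * ∑ q ∈ Finset.range τ, (η * w q) ^ 2 * ‖g q‖ ^ 2 := by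
          rw [Finset.card_range]
          congr 1
          exact Finset.sum_congr rfl fun q _ => h3 q
  have := mul_le_mul_of_nonneg_left hB (by positivity : (0:ℝ) ≤ L / 2)
  linarith [hdesc, hA, this]
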